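/- Let n be a natural number and a, b, c, d real numbers such that all Pochhammer symbols (c)_k, (d)_k, (a−c−n+1)_k are nonzero for 0 ≤ k ≤ n. Then ∑_{k=0}^n [(−n)_k (a)_k (b)_k]/[(c)_k (d)_k k!] = [(c−a)_n]/[(c)_n] · ∑_{k=0}^n [(−n)_k (a)_k (d−b)_k]/[(d)_k (a−c−n+1)_k k!]. -/

import Mathlib

open Finset

/-- The Pochhammer symbol `(a)_k = a (a+1) ⋯ (a+k-1)` over ℝ. -/
noncomputable def poch (a : ℝ) (k : ℕ) : ℝ := (ascPochhammer ℝ k).eval a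

lemma poch_zero (a : ℝ) : poch a 0 = 1 := by simp [poch]

lemma poch_succ (a : ℝ) (k : ℕ) : poch a (k+1) = poch a k * (a + k) := by
  simp [poch, ascPochhammer_succ_eval]

lemma poch_succ_left (a : ℝ) (k : ℕ) : poch a (k+1) = a * poch (a+1) k := by
  simp [poch, ascPochhammer_succ_left, Polynomial.eval_comp]

lemma poch_congr {x y : ℝ} (k : ℕ) (h : x = y) : poch x k = poch y k := by rw [h]

lemma poch_add (x : ℝ) (m l : ℕ) : poch x (m + l) = poch x m * poch (x + m) l := by
  induction l with
  | zero => simp [poch_zero]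
  | succ l ih =>
      rw [show m + (l+1) = (m+l)+1 from rfl, poch_succ, ih, poch_succ]
      push_cast; ring

lemma poch_reflect (x : ℝ) (m : ℕ) : poch x m = (-1)^m * poch (1 - x - m) m := by
  induction m with
  | zero => simp [poch_zero]
  | succ m ih =>
      rw [poch_succ, ih, poch_succ_left]
      have h : (1:ℝ) - x - ((m:ℕ)+1:ℕ) + 1 = 1 - x - m := by push_cast; ring
      push_cast at h ⊢
      rw [show (1:ℝ) - x - ((m:ℝ)+1) + 1 = 1 - x - m from by ring]
      ring

lemma poch_neg_nat (n k : ℕ) (h : k ≤ n) :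
    poch (-(n:ℝ)) k = (-1)^k * (n.choose k) * (k.factorial : ℝ) := by
  induction k with
  | zero => simp [poch_zero]
  | succ k ih =>
      have hk : k ≤ n := Nat.le_of_succ_le h
      rw [poch_succ, ih hk, Nat.factorial_succ]
      have hc := Nat.choose_succ_right_eq n k
      have hc' : ((n.choose (k+1) : ℝ)) * ((k:ℝ)+1) = (n.choose k : ℝ) * ((n:ℝ) - k) := by
        have := congrArg (Nat.cast : ℕ → ℝ) hc
        push_cast [Nat.cast_sub hk] at this
        linarith [this]
      push_cast
      linear_combination ((-1:ℝ))^k * (k.factorial : ℝ) * hc'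

noncomputable def VS (k : ℕ) (B D : ℝ) : ℝ :=
  ∑ j ∈ range (k+1), (-1:ℝ)^j * (k.choose j) * poch B j * poch (D + j) (k - j)

lemma VS_succ (k : ℕ) (B D : ℝ) : VS (k+1) B D = (D - B) * VS k B (D+1) := by
  have e1 : VS (k+1) B D =
      (∑ i ∈ range (k+1),
        ((-1:ℝ)^(i+1) * (k.choose i) * poch B (i+1) * poch (D+1+i) (k-i)
          + (-1:ℝ)^(i+1) * (k.choose (i+1)) * poch B (i+1) * poch (D+1+i) (k-i)))
      + poch D (k+1) := by
    rw [VS, Finset.sum_range_succ']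
    congr 1
    · apply Finset.sum_congr rfl
      intro i _
      have h2 : (k+1) - (i+1) = k - i := by omega
      rw [Nat.choose_succ_succ, h2]
      push_cast
      rw [show D + ((i:ℝ)+1) = D+1+(i:ℝ) from by ring]
      ring
    · simp [poch_zero]
  have e2 : (∑ i ∈ range (k+1),
        (-1:ℝ)^(i+1) * (k.choose (i+1)) * poch B (i+1) * poch (D+1+i) (k-i))
      + poch D (k+1)
      = ∑ j ∈ range (k+1),
        (-1:ℝ)^j * (k.choose j) * poch B j * ((D+j) * poch (D+1+j) (k-j)) := by
    have e3 : ∑ j ∈ range (k+2),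
        (-1:ℝ)^j * (k.choose j) * poch B j * poch (D+j) ((k+1)-j)
        = (∑ i ∈ range (k+1),
            (-1:ℝ)^(i+1) * (k.choose (i+1)) * poch B (i+1) * poch (D+1+i) (k-i))
          + poch D (k+1) := by
      rw [Finset.sum_range_succ']
      congr 1
      · apply Finset.sum_congr rfl
        intro i _
        have h2 : (k+1) - (i+1) = k - i := by omega
        rw [h2]
        push_cast
        rw [show D + ((i:ℝ)+1) = D+1+(i:ℝ) from by ring]
      · simp [poch_zero]
    rw [← e3, Finset.sum_range_succ]
    simp only [Nat.choose_succ_self, Nat.cast_zero, mul_zero, zero_mul, add_zero]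
    apply Finset.sum_congr rfl
    intro j hj
    have hjk : j ≤ k := by simpa [Nat.lt_succ_iff] using hj
    rw [show (k+1) - j = (k-j)+1 from by omega, poch_succ_left,
      show D + (j:ℝ) + 1 = D+1+(j:ℝ) from by ring]
  rw [e1, Finset.sum_add_distrib, add_assoc, e2, VS, Finset.mul_sum,
    ← Finset.sum_add_distrib]
  apply Finset.sum_congr rfl
  intro i _
  rw [poch_succ]
  ring

lemma VS_eq (k : ℕ) : ∀ B D : ℝ, VS k B D = poch (D - B) k := by
  induction k with
  | zero => intro B D; simp [VS, poch_zero]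
  | succ k ih =>
      intro B D
      rw [VS_succ, ih, poch_succ_left, poch_congr k (show D+1-B = D-B+1 from by ring)]

lemma sum_tri (f : ℕ → ℕ → ℝ) (n : ℕ) :
    ∑ k ∈ range (n+1), ∑ j ∈ range (k+1), f k j
      = ∑ j ∈ range (n+1), ∑ m ∈ range (n+1-j), f (j+m) j := by
  induction n with
  | zero => simp
  | succ n ih =>
      rw [Finset.sum_range_succ, ih]
      conv_rhs => rw [Finset.sum_range_succ]
      have h1 : ∀ j ∈ range (n+1), ∑ m ∈ range (n+1+1-j), f (j+m) j
          = (∑ m ∈ range (n+1-j), f (j+m) j) + f (n+1) j := by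
        intro j hj
        have hjn : j ≤ n := by simpa [Nat.lt_succ_iff] using hj
        rw [show n+1+1-j = (n+1-j)+1 from by omega, Finset.sum_range_succ,
          show j + (n+1-j) = n+1 from by omega]
      rw [Finset.sum_congr rfl h1, Finset.sum_add_distrib,
        Finset.sum_range_succ (fun j => f (n+1) j),
        show n+1+1-(n+1) = 1 from by omega, Finset.sum_range_one]
      ring

lemma neg_one_sq_pow (j : ℕ) : ((-1:ℝ))^j * (-1)^j = 1 := by
  rw [← pow_add]
  exact Even.neg_one_pow ⟨j, rfl⟩

lemma key (n : ℕ) (a b c d : ℝ) :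
    (∑ k ∈ range (n+1), (-1:ℝ)^k * (n.choose k) * poch a k * poch b k *
        poch (c+k) (n-k) * poch (d+k) (n-k)) * poch (a - c - n + 1) n
    = poch (c-a) n *
      ∑ k ∈ range (n+1), (-1:ℝ)^k * (n.choose k) * poch a k * poch (d-b) k *
        poch (d+k) (n-k) * poch ((a - c - n + 1)+k) (n-k) := by
  set A : ℝ := a - c - n + 1 with hA
  have hR : (∑ k ∈ range (n+1), (-1:ℝ)^k * (n.choose k) * poch a k * poch (d-b) k *
        poch (d+k) (n-k) * poch (A+k) (n-k))
      = ∑ k ∈ range (n+1), ∑ j ∈ range (k+1),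
          (fun (k j : ℕ) => (-1:ℝ)^k * (n.choose k) * poch a k *
            ((-1:ℝ)^j * (k.choose j) * poch b j * poch (d+j) (k-j)) *
            poch (d+k) (n-k) * poch (A+k) (n-k)) k j := by
    apply Finset.sum_congr rfl
    intro k _
    rw [show poch (d-b) k = VS k b d from (VS_eq k b d).symm, VS]
    simp only [Finset.sum_mul, Finset.mul_sum]
  rw [hR, sum_tri]
  have hInner : ∀ j ∈ range (n+1),
      (∑ m ∈ range (n+1-j), (fun (k j : ℕ) => (-1:ℝ)^k * (n.choose k) * poch a k *
            ((-1:ℝ)^j * (k.choose j) * poch b j * poch (d+j) (k-j)) *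
            poch (d+k) (n-k) * poch (A+k) (n-k)) (j+m) j)
      = (n.choose j : ℝ) * poch a j * poch b j * poch (d+j) (n-j) *
          poch (1 - c - n) (n-j) := by
    intro j hj
    have hjn : j ≤ n := by simpa [Nat.lt_succ_iff] using hj
    rw [show n+1-j = (n-j)+1 from by omega]
    have hterm : ∀ m ∈ range ((n-j)+1),
        ((-1:ℝ)^(j+m) * (n.choose (j+m)) * poch a (j+m) *
            ((-1:ℝ)^j * ((j+m).choose j) * poch b j * poch (d+j) ((j+m)-j)) *
            poch (d+(j+m:ℕ)) (n-(j+m)) * poch (A+(j+m:ℕ)) (n-(j+m)))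
        = ((n.choose j : ℝ) * poch a j * poch b j * poch (d+j) (n-j)) *
            ((-1:ℝ)^m * ((n-j).choose m) * poch (a+j) m *
              poch ((A+j) + m) ((n-j)-m)) := by
      intro m hm
      have hmn : m ≤ n - j := by simpa [Nat.lt_succ_iff] using hm
      have hjmn : j + m ≤ n := by omega
      have hs : ((-1:ℝ))^(j+m) * (-1)^j = (-1)^m := by
        rw [pow_add]
        calc ((-1:ℝ))^j * (-1)^m * (-1)^j = ((-1:ℝ))^j * (-1)^j * (-1)^m := by ring
          _ = (-1)^m := by rw [neg_one_sq_pow]; ring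
      have hch : ((n.choose (j+m) : ℝ)) * ((j+m).choose j) =
          (n.choose j : ℝ) * ((n-j).choose m) := by
        have := Nat.choose_mul (n := n) (k := j+m) (s := j) (Nat.le_add_right j m)
        rw [Nat.add_sub_cancel_left] at this
        exact_mod_cast congrArg (Nat.cast : ℕ → ℝ) this
      have hd2 : poch (d+(j:ℝ)) (n-j) =
          poch (d+(j:ℝ)) m * poch (d+(j:ℝ)+(m:ℝ)) ((n-j)-m) := by
        rw [show n - j = m + ((n-j)-m) from by omega, poch_add]
        rw [show m + ((n-j)-m) - m = (n-j)-m from by omega]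
      rw [Nat.add_sub_cancel_left, show n - (j+m) = (n-j)-m from by omega,
        poch_add a j m,
        poch_congr ((n-j)-m) (show d + ((j+m:ℕ):ℝ) = d + (j:ℝ) + (m:ℝ) from by push_cast; ring),
        poch_congr ((n-j)-m) (show A + ((j+m:ℕ):ℝ) = (A + (j:ℝ)) + (m:ℝ) from by push_cast; ring)]
      calc ((-1:ℝ)^(j+m) * (n.choose (j+m)) * (poch a j * poch (a+j) m) *
            ((-1:ℝ)^j * ((j+m).choose j) * poch b j * poch (d+j) m) *
            poch (d+(j:ℝ)+(m:ℝ)) ((n-j)-m) * poch ((A+j)+(m:ℝ)) ((n-j)-m))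
          = ((-1:ℝ)^(j+m) * (-1:ℝ)^j) * (((n.choose (j+m):ℝ)) * ((j+m).choose j)) *
              (poch a j * poch (a+j) m * poch b j * poch (d+j) m *
                poch (d+(j:ℝ)+(m:ℝ)) ((n-j)-m) * poch ((A+j)+(m:ℝ)) ((n-j)-m)) := by
            ring
        _ = ((-1:ℝ)^m) * ((n.choose j : ℝ) * ((n-j).choose m)) *
              (poch a j * poch (a+j) m * poch b j * poch (d+j) m *
                poch (d+(j:ℝ)+(m:ℝ)) ((n-j)-m) * poch ((A+j)+(m:ℝ)) ((n-j)-m)) := by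
            rw [hs, hch]
        _ = ((n.choose j : ℝ) * poch a j * poch b j * poch (d+j) (n-j)) *
              ((-1:ℝ)^m * ((n-j).choose m) * poch (a+j) m *
                poch ((A+j) + (m:ℝ)) ((n-j)-m)) := by
            rw [hd2]; ring
    rw [Finset.sum_congr rfl hterm, ← Finset.mul_sum,
      show (∑ m ∈ range ((n-j)+1), ((-1:ℝ)^m * ((n-j).choose m) * poch (a+j) m *
          poch ((A+j) + m) ((n-j)-m))) = VS (n-j) (a+j) (A+j) from rfl,
      VS_eq, poch_congr (n-j) (show A + (j:ℝ) - (a + (j:ℝ)) = 1 - c - n from by rw [hA]; ring)]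
  rw [Finset.sum_congr rfl hInner, Finset.sum_mul, Finset.mul_sum]
  apply Finset.sum_congr rfl
  intro j hj
  have hjn : j ≤ n := by simpa [Nat.lt_succ_iff] using hj
  have hrefl1 : poch A n = (-1:ℝ)^n * poch (c-a) n := by
    rw [poch_reflect A n, poch_congr n (show 1 - A - (n:ℝ) = c - a from by rw [hA]; ring)]
  have hrefl2 : poch (1 - c - (n:ℝ)) (n-j) = (-1:ℝ)^(n-j) * poch (c+j) (n-j) := by
    rw [poch_reflect (1 - c - (n:ℝ)) (n-j),
      poch_congr (n-j) (show 1 - (1 - c - (n:ℝ)) - ((n-j:ℕ):ℝ) = c + j from by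
        push_cast [Nat.cast_sub hjn]; ring)]
  have hsgn : ((-1:ℝ))^j * (-1)^n = (-1)^(n-j) := by
    have h : ((-1:ℝ))^n = (-1)^(n-j) * (-1)^j := by
      rw [← pow_add, show n-j+j = n from by omega]
    rw [h, mul_comm ((-1:ℝ)^(n-j)) _, ← mul_assoc, neg_one_sq_pow, one_mul]
  rw [hrefl1, hrefl2]
  calc (-1:ℝ)^j * (n.choose j) * poch a j * poch b j * poch (c+j) (n-j) *
        poch (d+j) (n-j) * ((-1:ℝ)^n * poch (c-a) n)
      = ((-1:ℝ)^j * (-1)^n) * ((n.choose j : ℝ) * poch a j * poch b j *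
          poch (c+j) (n-j) * poch (d+j) (n-j) * poch (c-a) n) := by ring
    _ = poch (c-a) n * ((n.choose j : ℝ) * poch a j * poch b j * poch (d+j) (n-j) *
          ((-1:ℝ)^(n-j) * poch (c+j) (n-j))) := by rw [hsgn]; ring

theorem thomae_A6 (n : ℕ) (a b c d : ℝ)
    (hc : ∀ k ≤ n, poch c k ≠ 0) (hd : ∀ k ≤ n, poch d k ≠ 0)
    (h1 : ∀ k ≤ n, poch (a - c - n + 1) k ≠ 0) :
    ∑ k ∈ Finset.range (n + 1),
        (poch (-(n : ℝ)) k * poch a k * poch b k) /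
          (poch c k * poch d k * (k.factorial : ℝ)) =
      poch (c - a) n / poch c n *
        ∑ k ∈ Finset.range (n + 1),
          (poch (-(n : ℝ)) k * poch a k * poch (d - b) k) /
            (poch d k * poch (a - c - n + 1) k * (k.factorial : ℝ)) := by
  have hcn := hc n le_rfl
  have hdn := hd n le_rfl
  have hAn := h1 n le_rfl
  have hsplit : ∀ (x : ℝ) (k : ℕ), k ≤ n → poch x n = poch x k * poch (x+k) (n-k) := by
    intro x k hk
    have h := poch_add x k (n-k)
    rw [show k + (n-k) = n from by omega] at h
    exact h
  have hLterm : ∀ k ∈ range (n+1),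
      (poch (-(n:ℝ)) k * poch a k * poch b k) /
          (poch c k * poch d k * (k.factorial : ℝ))
      = ((-1:ℝ)^k * (n.choose k) * poch a k * poch b k * poch (c+k) (n-k) *
          poch (d+k) (n-k)) / (poch c n * poch d n) := by
    intro k hk
    have hkn : k ≤ n := by simpa [Nat.lt_succ_iff] using hk
    have hcs := hsplit c k hkn
    have hds := hsplit d k hkn
    have hck := hc k hkn
    have hdk := hd k hkn
    have hc2 : poch (c+k) (n-k) ≠ 0 := by
      intro h; exact hcn (by rw [hcs, h, mul_zero])
    have hd2 : poch (d+k) (n-k) ≠ 0 := by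
      intro h; exact hdn (by rw [hds, h, mul_zero])
    have hfk : (k.factorial : ℝ) ≠ 0 := Nat.cast_ne_zero.mpr k.factorial_ne_zero
    rw [poch_neg_nat n k hkn, hcs, hds]
    field_simp
  have hRterm : ∀ k ∈ range (n+1),
      (poch (-(n:ℝ)) k * poch a k * poch (d-b) k) /
          (poch d k * poch (a - c - n + 1) k * (k.factorial : ℝ))
      = ((-1:ℝ)^k * (n.choose k) * poch a k * poch (d-b) k * poch (d+k) (n-k) *
          poch ((a - c - n + 1)+k) (n-k)) / (poch d n * poch (a - c - n + 1) n) := by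
    intro k hk
    have hkn : k ≤ n := by simpa [Nat.lt_succ_iff] using hk
    have hds := hsplit d k hkn
    have hAs := hsplit (a - c - n + 1) k hkn
    have hdk := hd k hkn
    have hAk := h1 k hkn
    have hd2 : poch (d+k) (n-k) ≠ 0 := by
      intro h; exact hdn (by rw [hds, h, mul_zero])
    have hA2 : poch ((a - c - n + 1)+k) (n-k) ≠ 0 := by
      intro h; exact hAn (by rw [hAs, h, mul_zero])
    have hfk : (k.factorial : ℝ) ≠ 0 := Nat.cast_ne_zero.mpr k.factorial_ne_zero
    rw [poch_neg_nat n k hkn, hds, hAs]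
    field_simp
  rw [Finset.sum_congr rfl hLterm, Finset.sum_congr rfl hRterm,
    ← Finset.sum_div, ← Finset.sum_div]
  have hkey := key n a b c d
  field_simp
  linear_combination hkey
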